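/- The record time trimmer R_trim is not J1-continuous on 𝔻: for x := 1_{[1/3,1]} + 1_{[2/3,1]} and x_n := x + (1/n)·1_{[2/3,1]} (n ≥ 1), the sequence x_n converges to x in the J1-topology, but R_trim(x_n) does not converge to R_trim(x) in the J1-topology; indeed, for every sequence λ_n ∈ Λ with ‖λ_n − I‖ → 0, once λ_n^{-1}(1/3) < 2/3 one has ‖R_trim(x_n) ∘ λ_n − R_trim(x)‖ ≥ 1, so ‖R_trim(x_n) ∘ λ_n − R_trim(x)‖ does not tend to 0. -/

import Mathlib

open Filter Topology Set unitInterval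

noncomputable section

open scoped Classical

instance : Fact ((0:ℝ) ≤ 1) := ⟨zero_le_one⟩

/-- The space `𝔻` of càdlàg functions on `[0,1]`: right-continuous everywhere with
finite left limits everywhere (conditions at the endpoints hold vacuously). -/
def Cadlag (x : I → ℝ) : Prop :=
  (∀ τ : I, Tendsto x (𝓝[>] τ) (𝓝 (x τ))) ∧ (∀ τ : I, ∃ l : ℝ, Tendsto x (𝓝[<] τ) (𝓝 l))

/-- The sup-norm `‖x‖ = sup_{0 ≤ τ ≤ 1} |x(τ)|`. -/
def dNorm (x : I → ℝ) : ℝ := ⨆ τ : I, |x τ|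

/-- The jump `Δx(τ) = x(τ) - x(τ-)` of `x` at `τ`, with `Δx(0) := 0`. -/
def jump (x : I → ℝ) (τ : I) : ℝ := if τ = 0 then 0 else x τ - Function.leftLim x τ

/-- The running supremum `S(x)(τ) = sup_{0 ≤ s ≤ τ} x(s)`. -/
def runSup (x : I → ℝ) (τ : I) : ℝ := sSup (x '' {s : I | s ≤ τ})

/-- The running absolute supremum `S̃(x)(τ) = sup_{0 ≤ s ≤ τ} |x(s)|`. -/
def runAbsSup (x : I → ℝ) (τ : I) : ℝ := sSup ((fun s => |x s|) '' {s : I | s ≤ τ})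

/-- The largest positive jump `S_{+Δ}(x)(τ) = sup_{0 ≤ s ≤ τ} Δx(s)`. -/
def posJumpSup (x : I → ℝ) (τ : I) : ℝ := sSup (jump x '' {s : I | s ≤ τ})

/-- The largest modulus jump `S̃_Δ(x)(τ) = sup_{0 ≤ s ≤ τ} |Δx(s)|`. -/
def modJumpSup (x : I → ℝ) (τ : I) : ℝ := sSup ((fun s => |jump x s|) '' {s : I | s ≤ τ})

/-- The first extremal positive trimming ("trim as you go") operator
`T^{(1,+)}_{rim}(x) = x - S_{+Δ}(x)`. -/
def trimPos (x : I → ℝ) : I → ℝ := fun τ => x τ - posJumpSup x τ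

/-- `Λ`: continuous strictly increasing bijections of `[0,1]` fixing the endpoints. -/
def IsTimeChange (l : I → I) : Prop := Continuous l ∧ StrictMono l ∧ l 0 = 0 ∧ l 1 = 1

/-- Convergence in the (strong) Skorokhod `J₁`-topology. -/
def J1Tendsto (xn : ℕ → I → ℝ) (x : I → ℝ) : Prop :=
  ∃ l : ℕ → I → I, (∀ n, IsTimeChange (l n)) ∧
    Tendsto (fun n => dNorm (fun τ => (l n τ : ℝ) - (τ : ℝ))) atTop (𝓝 0) ∧
    Tendsto (fun n => dNorm (fun τ => xn n (l n τ) - x τ)) atTop (𝓝 0)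

/-- `Ã_τ(x)`: the times `s ∈ (0,τ]` of the largest modulus jump of `x` on `[0,τ]`
(empty when `S̃_Δ(x)(τ) = 0`). -/
def tildeA (x : I → ℝ) (τ : I) : Set I :=
  {s : I | 0 < s ∧ s ≤ τ ∧ 0 < |jump x s| ∧ |jump x s| = modJumpSup x τ}

/-- `A⁺_τ(x)`: the times `s ∈ (0,τ]` of the largest positive jump of `x` on `[0,τ]`
(empty when `S_{+Δ}(x)(τ) = 0`). -/
def posA (x : I → ℝ) (τ : I) : Set I :=
  {s : I | 0 < s ∧ s ≤ τ ∧ 0 < jump x s ∧ jump x s = posJumpSup x τ}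

/-- The signed largest-modulus ("trim as you go") trimmer `𝔗_rim`:
`𝔗_rim(x)(τ) = x(τ) - Δx(L̃_τ(x))` if `Ã_τ(x) ≠ ∅`, `x(τ)` otherwise, where
`L̃_τ(x) = max Ã_τ(x)`. -/
def sgnModTrim (x : I → ℝ) : I → ℝ := fun τ =>
  if (tildeA x τ).Nonempty then x τ - jump x (sSup (tildeA x τ)) else x τ

/-- The record time ("lookback") trimmer:
`R_trim(x) = x - Δx(R₁(x))·1_{[R₁(x),1]}` if `A⁺₁(x) ≠ ∅`, `x` otherwise, where
`R₁(x) = min A⁺₁(x)`. -/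
def recordTrim (x : I → ℝ) : I → ℝ := fun τ =>
  if (posA x 1).Nonempty ∧ sInf (posA x 1) ≤ τ then x τ - jump x (sInf (posA x 1)) else x τ

/-- The modulus record time trimmer:
`R̃_trim(x) = x - Δx(R̃₁(x))·1_{[R̃₁(x),1]}` if `Ã₁(x) ≠ ∅`, `x` otherwise, where
`R̃₁(x) = min Ã₁(x)`. -/
def modRecordTrim (x : I → ℝ) : I → ℝ := fun τ =>
  if (tildeA x 1).Nonempty ∧ sInf (tildeA x 1) ≤ τ then x τ - jump x (sInf (tildeA x 1)) else x τ



namespace Stmt18Aux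

def a3 : I := ⟨1/3, by norm_num⟩
def b3 : I := ⟨2/3, by norm_num⟩

def g (B : ℝ) : I → ℝ := fun τ =>
  (if (1/3:ℝ) ≤ (τ:ℝ) then 1 else 0) + B * (if (2/3:ℝ) ≤ (τ:ℝ) then 1 else 0)

lemma g_lt13 (B : ℝ) {s : I} (h : (s:ℝ) < 1/3) : g B s = 0 := by
  simp only [g, if_neg (not_le.mpr h), if_neg (by intro h2; linarith : ¬ (2/3:ℝ) ≤ (s:ℝ))]
  ring

lemma g_mid (B : ℝ) {s : I} (h1 : (1/3:ℝ) ≤ (s:ℝ)) (h2 : (s:ℝ) < 2/3) : g B s = 1 := by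
  simp only [g, if_pos h1, if_neg (not_le.mpr h2)]; ring

lemma g_hi (B : ℝ) {s : I} (h : (2/3:ℝ) ≤ (s:ℝ)) : g B s = 1 + B := by
  simp only [g, if_pos (by linarith : (1/3:ℝ) ≤ (s:ℝ)), if_pos h]; ring

lemma leftLim_eq_of_Ioo {f : I → ℝ} {τ : I} {c : I} (hc : c < τ) {v : ℝ}
    (h : ∀ s : I, c < s → s < τ → f s = v) : Function.leftLim f τ = v := by
  have hne : (𝓝[<] τ).NeBot := nhdsWithin_Iio_self_neBot' ⟨c, hc⟩
  apply leftLim_eq_of_tendsto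
  apply Tendsto.congr' _ tendsto_const_nhds
  filter_upwards [Ioo_mem_nhdsLT hc] with s hs
  exact (h s hs.1 hs.2).symm

lemma jump_g (B : ℝ) (τ : I) :
    jump (g B) τ = if τ = a3 then 1 else if τ = b3 then B else 0 := by
  have hτ0 : (0:ℝ) ≤ (τ:ℝ) := τ.2.1
  by_cases h0 : τ = 0
  · subst h0
    rw [jump, if_pos rfl, if_neg (by simp [a3, Subtype.ext_iff]),
      if_neg (by simp [b3, Subtype.ext_iff]; norm_num)]
  have ht0 : (0:ℝ) < (τ:ℝ) := by
    rcases hτ0.lt_or_eq with h | h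
    · exact h
    · exact absurd (Subtype.ext h.symm : τ = 0) h0
  rw [jump, if_neg h0]
  rcases lt_trichotomy ((τ:ℝ)) (1/3) with h13 | h13 | h13
  · have hL : Function.leftLim (g B) τ = 0 :=
      leftLim_eq_of_Ioo (Subtype.coe_lt_coe.mp (by exact_mod_cast ht0) : (0:I) < τ)
        (fun s hs1 hs2 => g_lt13 B (lt_trans (Subtype.coe_lt_coe.mpr hs2) h13))
    rw [hL, g_lt13 B h13, if_neg (by intro h; rw [h] at h13; norm_num [a3] at h13),
      if_neg (by intro h; rw [h] at h13; norm_num [b3] at h13)]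
    ring
  · have hτa : τ = a3 := Subtype.ext h13
    have hL : Function.leftLim (g B) τ = 0 :=
      leftLim_eq_of_Ioo (Subtype.coe_lt_coe.mp (by exact_mod_cast ht0) : (0:I) < τ)
        (fun s hs1 hs2 => g_lt13 B (lt_of_lt_of_le (Subtype.coe_lt_coe.mpr hs2) h13.le))
    rw [hL, if_pos hτa, g_mid B h13.ge (by rw [h13]; norm_num)]
    ring
  · have ha3τ : a3 < τ := Subtype.coe_lt_coe.mp (by exact_mod_cast h13)
    rcases lt_trichotomy ((τ:ℝ)) (2/3) with h23 | h23 | h23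
    · have hL : Function.leftLim (g B) τ = 1 :=
        leftLim_eq_of_Ioo ha3τ (fun s hs1 hs2 =>
          g_mid B (le_of_lt (Subtype.coe_lt_coe.mpr hs1))
            (lt_trans (Subtype.coe_lt_coe.mpr hs2) h23))
      rw [hL, g_mid B h13.le h23,
        if_neg (by intro h; rw [h] at h13; norm_num [a3] at h13),
        if_neg (by intro h; rw [h] at h23; norm_num [b3] at h23)]
      ring
    · have hτb : τ = b3 := Subtype.ext h23
      have hL : Function.leftLim (g B) τ = 1 :=
        leftLim_eq_of_Ioo ha3τ (fun s hs1 hs2 =>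
          g_mid B (le_of_lt (Subtype.coe_lt_coe.mpr hs1))
            (lt_of_lt_of_le (Subtype.coe_lt_coe.mpr hs2) h23.le))
      rw [hL, g_hi B h23.ge, if_neg (by intro h; rw [h] at h23; norm_num [a3] at h23),
        if_pos hτb]
      ring
    · have hb3τ : b3 < τ := Subtype.coe_lt_coe.mp (by exact_mod_cast h23)
      have hL : Function.leftLim (g B) τ = 1 + B :=
        leftLim_eq_of_Ioo hb3τ (fun s hs1 hs2 =>
          g_hi B (le_of_lt (Subtype.coe_lt_coe.mpr hs1)))
      rw [hL, g_hi B h23.le,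
        if_neg (by intro h; rw [h] at h23; norm_num [a3] at h23),
        if_neg (by intro h; rw [h] at h23; norm_num [b3] at h23)]
      ring

lemma a3_ne_b3 : a3 ≠ b3 := by
  intro h; rw [Subtype.ext_iff] at h; norm_num [a3, b3] at h

lemma a3_pos : 0 < a3 := by
  rw [← Subtype.coe_lt_coe]; norm_num [a3]

lemma b3_pos : 0 < b3 := by
  rw [← Subtype.coe_lt_coe]; norm_num [b3]

lemma a3_le_b3 : a3 ≤ b3 := by
  rw [← Subtype.coe_le_coe]; norm_num [a3, b3]

lemma jump_g_a3 (B : ℝ) : jump (g B) a3 = 1 := by rw [jump_g, if_pos rfl]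

lemma jump_g_b3 (B : ℝ) : jump (g B) b3 = B := by
  rw [jump_g, if_neg (Ne.symm a3_ne_b3), if_pos rfl]

lemma posJumpSup_g (B : ℝ) (hB : 1 ≤ B) : posJumpSup (g B) 1 = B := by
  have hG : IsGreatest (jump (g B) '' {s : I | s ≤ 1}) B := by
    constructor
    · exact ⟨b3, le_one', jump_g_b3 B⟩
    · rintro y ⟨s, -, rfl⟩
      rw [jump_g]
      split_ifs <;> linarith
  exact hG.csSup_eq

lemma posA_x : posA (g 1) 1 = {a3, b3} := by
  ext s
  simp only [posA, mem_setOf_eq, posJumpSup_g 1 le_rfl, mem_insert_iff, mem_singleton_iff]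
  constructor
  · rintro ⟨-, -, hpos, -⟩
    by_contra hc
    push_neg at hc
    rw [jump_g, if_neg hc.1, if_neg hc.2] at hpos
    exact lt_irrefl 0 hpos
  · rintro (rfl | rfl)
    · exact ⟨a3_pos, le_one', by rw [jump_g_a3]; norm_num, by rw [jump_g_a3]⟩
    · exact ⟨b3_pos, le_one', by rw [jump_g_b3]; norm_num, by rw [jump_g_b3]⟩

lemma posA_xn (B : ℝ) (hB : 1 < B) : posA (g B) 1 = {b3} := by
  ext s
  simp only [posA, mem_setOf_eq, posJumpSup_g B hB.le, mem_singleton_iff]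
  constructor
  · rintro ⟨-, -, hpos, heq⟩
    rw [jump_g] at hpos heq
    by_contra hc
    by_cases ha : s = a3
    · rw [if_pos ha] at heq; linarith
    · rw [if_neg ha, if_neg hc] at hpos; exact lt_irrefl 0 hpos
  · rintro rfl
    exact ⟨b3_pos, le_one', by rw [jump_g_b3]; linarith, by rw [jump_g_b3]⟩

lemma recordTrim_x (τ : I) : recordTrim (g 1) τ = if (2/3:ℝ) ≤ (τ:ℝ) then 1 else 0 := by
  rw [recordTrim, posA_x]
  have hinf : sInf ({a3, b3} : Set I) = a3 := by
    rw [sInf_pair]; exact inf_eq_left.mpr a3_le_b3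
  rw [hinf]
  by_cases h : a3 ≤ τ
  · rw [if_pos ⟨⟨a3, mem_insert _ _⟩, h⟩, jump_g_a3]
    have h13 : (1/3:ℝ) ≤ (τ:ℝ) := by
      have := Subtype.coe_le_coe.mpr h
      simpa [a3] using this
    by_cases h2 : (2/3:ℝ) ≤ (τ:ℝ)
    · rw [g_hi 1 h2, if_pos h2]; ring
    · rw [g_mid 1 h13 (not_le.mp h2), if_neg h2]; ring
  · rw [if_neg (fun hc => h hc.2)]
    have h13 : (τ:ℝ) < 1/3 := by
      by_contra hc
      exact h (Subtype.coe_le_coe.mp (by simpa [a3] using not_lt.mp hc))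
    rw [g_lt13 1 h13, if_neg (by intro h2; linarith)]

lemma recordTrim_xn (B : ℝ) (hB : 1 < B) (τ : I) :
    recordTrim (g B) τ = if (1/3:ℝ) ≤ (τ:ℝ) then 1 else 0 := by
  rw [recordTrim, posA_xn B hB, sInf_singleton]
  by_cases h : b3 ≤ τ
  · have h23 : (2/3:ℝ) ≤ (τ:ℝ) := by
      have := Subtype.coe_le_coe.mpr h
      simpa [b3] using this
    rw [if_pos ⟨⟨b3, rfl⟩, h⟩, jump_g_b3, g_hi B h23, if_pos (by linarith)]
    ring
  · have h23 : (τ:ℝ) < 2/3 := by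
      by_contra hc
      exact h (Subtype.coe_le_coe.mp (by simpa [b3] using not_lt.mp hc))
    rw [if_neg (fun hc => h hc.2)]
    by_cases h13 : (1/3:ℝ) ≤ (τ:ℝ)
    · rw [g_mid B h13 h23, if_pos h13]
    · rw [g_lt13 B (not_le.mp h13), if_neg h13]

lemma abs_le_dNorm {f : I → ℝ} {M : ℝ} (hM : ∀ τ, |f τ| ≤ M) (τ : I) : |f τ| ≤ dNorm f :=
  le_ciSup ⟨M, by rintro y ⟨t, rfl⟩; exact hM t⟩ τ

lemma dNorm_le {f : I → ℝ} {M : ℝ} (hM : ∀ τ, |f τ| ≤ M) : dNorm f ≤ M :=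
  ciSup_le hM

lemma key (B : ℝ) (hB : 1 < B) (l : I → I) (s : I) (hls : ((l s : I) : ℝ) = 1/3)
    (hs : (s:ℝ) < 2/3) :
    1 ≤ dNorm (fun τ => recordTrim (g B) (l τ) - recordTrim (g 1) τ) := by
  have hbd : ∀ τ : I, |recordTrim (g B) (l τ) - recordTrim (g 1) τ| ≤ 2 := fun τ => by
    rw [recordTrim_xn B hB, recordTrim_x]
    split_ifs <;> norm_num
  have hval : recordTrim (g B) (l s) - recordTrim (g 1) s = 1 := by
    rw [recordTrim_xn B hB, recordTrim_x, if_pos (by rw [hls]), if_neg (not_le.mpr hs)]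
    ring
  calc (1:ℝ) = |recordTrim (g B) (l s) - recordTrim (g 1) s| := by rw [hval]; norm_num
    _ ≤ _ := abs_le_dNorm hbd s

end Stmt18Aux

open Stmt18Aux in
/-- the record time trimmer `R_trim` is not `J₁`-continuous:
with `x = 1_{[1/3,1]} + 1_{[2/3,1]}` and `x_n = x + (1/n)·1_{[2/3,1]}` one has
`x_n → x` in `J₁`, yet for any `λ_n ∈ Λ` with `‖λ_n - I‖ → 0`, whenever
`λ_n⁻¹(1/3) < 2/3` (and `n ≥ 1`) one has `‖R_trim(x_n) ∘ λ_n - R_trim(x)‖ ≥ 1`;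
hence `R_trim(x_n)` does not converge to `R_trim(x)` in `J₁`. -/
theorem stmt18 (x : I → ℝ) (xn : ℕ → I → ℝ)
    (hxdef : ∀ τ : I, x τ =
      (if (1/3 : ℝ) ≤ (τ : ℝ) then 1 else 0) + (if (2/3 : ℝ) ≤ (τ : ℝ) then 1 else 0))
    (hxndef : ∀ n : ℕ, 1 ≤ n → ∀ τ : I,
      xn n τ = x τ + (1 / (n : ℝ)) * (if (2/3 : ℝ) ≤ (τ : ℝ) then 1 else 0)) :
    J1Tendsto xn x ∧
    (∀ l : ℕ → I → I, (∀ n, IsTimeChange (l n)) →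
      Tendsto (fun n => dNorm (fun τ => (l n τ : ℝ) - (τ : ℝ))) atTop (𝓝 0) →
      ∀ n : ℕ, 1 ≤ n → ∀ s : I, (l n s : ℝ) = 1/3 → (s : ℝ) < 2/3 →
        1 ≤ dNorm (fun τ => recordTrim (xn n) (l n τ) - recordTrim x τ)) ∧
    ¬ J1Tendsto (fun n => recordTrim (xn n)) (recordTrim x) := by
  have hx : x = g 1 := funext fun τ => by rw [hxdef]; simp [g]
  have hxn : ∀ n : ℕ, 1 ≤ n → xn n = g (1 + 1/(n:ℝ)) := fun n hn => funext fun τ => by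
    rw [hxndef n hn, hxdef]; simp only [g]; ring
  have hBn : ∀ n : ℕ, 1 ≤ n → 1 < 1 + 1/(n:ℝ) := fun n hn => by
    have : (0:ℝ) < (n:ℝ) := by exact_mod_cast hn
    have : (0:ℝ) < 1/(n:ℝ) := by positivity
    linarith
  have part2 : ∀ l : ℕ → I → I, (∀ n, IsTimeChange (l n)) →
      Tendsto (fun n => dNorm (fun τ => (l n τ : ℝ) - (τ : ℝ))) atTop (𝓝 0) →
      ∀ n : ℕ, 1 ≤ n → ∀ s : I, (l n s : ℝ) = 1/3 → (s : ℝ) < 2/3 →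
        1 ≤ dNorm (fun τ => recordTrim (xn n) (l n τ) - recordTrim x τ) := by
    intro l _ _ n hn s hls hs
    rw [hxn n hn, hx]
    exact key _ (hBn n hn) (l n) s hls hs
  refine ⟨?_, part2, ?_⟩
  · refine ⟨fun _ => id, fun n => ⟨continuous_id, fun a b h => h, rfl, rfl⟩, ?_, ?_⟩
    · simp only [dNorm, id, sub_self, abs_zero, ciSup_const]; exact (tendsto_const_nhds : Tendsto (fun _ : ℕ => (0:ℝ)) atTop (𝓝 0))
    · apply squeeze_zero' (g := fun n : ℕ => 1/(n:ℝ))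
      · filter_upwards [eventually_ge_atTop 1] with n hn
        have hb : ∀ τ : I, |xn n (id τ) - x τ| ≤ 1/(n:ℝ) := fun τ => by
          have hnn : (0:ℝ) < 1/(n:ℝ) := by
            have : (0:ℝ) < (n:ℝ) := by exact_mod_cast hn
            positivity
          rw [id, hxndef n hn τ]
          have : x τ + 1/(n:ℝ) * (if (2/3:ℝ) ≤ (τ:ℝ) then 1 else 0) - x τ
              = 1/(n:ℝ) * (if (2/3:ℝ) ≤ (τ:ℝ) then 1 else 0) := by ring
          rw [this]
          split_ifs <;> simp [abs_of_nonneg (by positivity : (0:ℝ) ≤ ((n:ℝ))⁻¹), hnn.le]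
        exact le_trans (abs_nonneg _) (abs_le_dNorm hb 0)
      · filter_upwards [eventually_ge_atTop 1] with n hn
        apply dNorm_le
        intro τ
        have hnn : (0:ℝ) < 1/(n:ℝ) := by
          have : (0:ℝ) < (n:ℝ) := by exact_mod_cast hn
          positivity
        rw [id, hxndef n hn τ]
        have : x τ + 1/(n:ℝ) * (if (2/3:ℝ) ≤ (τ:ℝ) then 1 else 0) - x τ
            = 1/(n:ℝ) * (if (2/3:ℝ) ≤ (τ:ℝ) then 1 else 0) := by ring
        rw [this]
        split_ifs <;> simp [abs_of_nonneg (by positivity : (0:ℝ) ≤ ((n:ℝ))⁻¹), hnn.le]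
      · exact tendsto_one_div_atTop_nhds_zero_nat
  · rintro ⟨l, hl, hlI, hconv⟩
    have h1 : ∀ᶠ n in atTop, dNorm (fun τ => ((l n τ : ℝ) - (τ:ℝ))) < 1/4 :=
      hlI.eventually (gt_mem_nhds (by norm_num))
    have h2 : ∀ᶠ n in atTop,
        dNorm (fun τ => recordTrim (xn n) (l n τ) - recordTrim x τ) < 1 :=
      hconv.eventually (gt_mem_nhds one_pos)
    obtain ⟨n, hn1, h14, hlt⟩ := ((eventually_ge_atTop 1).and (h1.and h2)).exists
    obtain ⟨hcont, hmono, hl0, hl1⟩ := hl n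
    have hmem : a3 ∈ Icc (l n 0) (l n 1) := by
      rw [hl0, hl1]; exact ⟨nonneg', le_one'⟩
    obtain ⟨s, -, hls⟩ := intermediate_value_Icc (nonneg' : (0:I) ≤ 1)
      hcont.continuousOn hmem
    have hls' : ((l n s : I) : ℝ) = 1/3 := by rw [hls]; rfl
    have hbd : ∀ τ : I, |((l n τ : I) : ℝ) - (τ:ℝ)| ≤ 2 := fun τ => by
      have h1' := (l n τ).2.1; have h2' := (l n τ).2.2
      have h3' := τ.2.1; have h4' := τ.2.2
      rw [abs_le]; constructor <;> linarith
    have habs : |((l n s : I) : ℝ) - (s:ℝ)| < 1/4 :=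
      lt_of_le_of_lt (abs_le_dNorm hbd s) h14
    have hs23 : (s:ℝ) < 2/3 := by
      rw [hls', abs_lt] at habs
      linarith [habs.1, habs.2]
    have := part2 l hl hlI n hn1 s hls' hs23
    linarith

end
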